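/- For the POVM G_i^{(U)} = λ U|i⟩⟨i|U† + ((1−λ)/d) I and the projective POVM E_i^{(U)} = U|i⟩⟨i|U†, the averaged distance satisfies ∫ dU D(E^{(U)}, G^{(U)}) = ((d−1)/(d(d+1)))(1−λ)², where D is the squared-overlap distance D(P,Q) = ∫ dψ Σ_i |⟨ψ|P_i − Q_i|ψ⟩|² and dU is the Haar measure on SU(d). -/

import Mathlib

open MeasureTheory Matrix
open scoped ComplexOrder

noncomputable section

/-- A POVM with `m` outcomes on `ℂ^d`: positive semidefinite operators summing to the identity. -/
def IsPOVM {d m : ℕ} (P : Fin m → Matrix (Fin d) (Fin d) ℂ) : Prop :=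
  (∀ i, (P i).PosSemidef) ∧ ∑ i, P i = 1

/-- The expectation value `⟨ψ|A|ψ⟩`. -/
def expVal {d : ℕ} (A : Matrix (Fin d) (Fin d) ℂ) (ψ : Fin d → ℂ) : ℂ :=
  star ψ ⬝ᵥ A.mulVec ψ

/-- `D(P,Q) = ∫ dψ ∑ᵢ |⟨ψ|Pᵢ - Qᵢ|ψ⟩|²`. -/
def povmDist {d m : ℕ} (μ : Measure (Fin d → ℂ))
    (P Q : Fin m → Matrix (Fin d) (Fin d) ℂ) : ℝ :=
  ∫ ψ, ∑ i, ‖expVal (P i - Q i) ψ‖ ^ 2 ∂μ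

/-- The normalized unitarily invariant measure on unit vectors of `ℂ^d`:
a probability measure concentrated on the unit sphere, invariant under every unitary. -/
def UnitInvariantMeasure {d : ℕ} (μ : Measure (Fin d → ℂ)) : Prop :=
  IsProbabilityMeasure μ ∧
  (∀ᵐ ψ ∂μ, ∑ i, ‖ψ i‖ ^ 2 = 1) ∧
  ∀ U ∈ Matrix.unitaryGroup (Fin d) ℂ, Measure.map (fun ψ => U.mulVec ψ) μ = μ
instance matrixMeasurableSpace {d : ℕ} : MeasurableSpace (Matrix (Fin d) (Fin d) ℂ) :=
  inferInstanceAs (MeasurableSpace (Fin d → Fin d → ℂ))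

/-- `μ` is the normalized Haar measure on `SU(d)`, viewed as a measure on matrices:
a probability measure concentrated on `SU(d)` and left-invariant under `SU(d)`. -/
def IsHaarSU {d : ℕ} (μ : Measure (Matrix (Fin d) (Fin d) ℂ)) : Prop :=
  IsProbabilityMeasure μ ∧
  (∀ᵐ U ∂μ, U ∈ Matrix.specialUnitaryGroup (Fin d) ℂ) ∧
  ∀ V ∈ Matrix.specialUnitaryGroup (Fin d) ℂ,
    Measure.map (fun U => V * U) μ = μ

/-- The von Neumann POVM `E^{(U)}` with elements `U|i⟩⟨i|U†`. -/
def rotatedPOVM {d : ℕ} (U : Matrix (Fin d) (Fin d) ℂ) :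
    Fin d → Matrix (Fin d) (Fin d) ℂ :=
  fun i => U * Matrix.single i i 1 * Uᴴ

/-- The noisy POVM `G^{(U)}_i = λ U|i⟩⟨i|U† + ((1-λ)/d) I`. -/
def noisyPOVM {d : ℕ} (lam : ℝ) (U : Matrix (Fin d) (Fin d) ℂ) :
    Fin d → Matrix (Fin d) (Fin d) ℂ :=
  fun i => (lam : ℂ) • rotatedPOVM U i + (((1 - lam) / d : ℝ) : ℂ) • 1

section AuxForProof
variable {d : ℕ}

lemma four_phase (a b : ℂ) :
    Complex.normSq (a+b)^2 + Complex.normSq (a-b)^2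
      + Complex.normSq (a+Complex.I*b)^2 + Complex.normSq (a-Complex.I*b)^2
    = 4*Complex.normSq a^2 + 4*Complex.normSq b^2
      + 16*(Complex.normSq a * Complex.normSq b) := by
  simp only [Complex.normSq_apply, Complex.add_re, Complex.add_im, Complex.sub_re,
    Complex.sub_im, Complex.mul_re, Complex.mul_im, Complex.I_re, Complex.I_im]
  ring

lemma normSq_add_le (x y : ℂ) :
    Complex.normSq (x + y) ≤ 2 * Complex.normSq x + 2 * Complex.normSq y := by
  rw [← Complex.sq_norm, ← Complex.sq_norm x, ← Complex.sq_norm y]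
  have h1 := norm_add_le x y
  have h2 := norm_nonneg x
  have h3 := norm_nonneg y
  have h4 := norm_nonneg (x+y)
  nlinarith [sq_nonneg (‖x‖ - ‖y‖)]

lemma normSq_one_of (ω : ℂ) (hω : starRingEnd ℂ ω * ω = 1) : Complex.normSq ω = 1 := by
  have := Complex.normSq_eq_conj_mul_self (z := ω)
  rw [hω] at this
  have : ((Complex.normSq ω : ℝ) : ℂ) = ((1:ℝ):ℂ) := by rw [this]; norm_num
  exact_mod_cast this

variable {d : ℕ}

lemma conj_one' : starRingEnd ℂ (1:ℂ) = 1 := map_one _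

lemma stdBasis_conjT (a b : Fin d) (c : ℂ) :
    (Matrix.single a b c)ᴴ = Matrix.single b a (starRingEnd ℂ c) := by
  ext x y
  simp only [Matrix.conjTranspose_apply, Matrix.single, Matrix.of_apply]
  by_cases h1 : b = x <;> by_cases h2 : a = y <;> simp [h1, h2, and_comm]

def rotMat (i j : Fin d) (ω : ℂ) : Matrix (Fin d) (Fin d) ℂ :=
  (((Real.sqrt 2)⁻¹ : ℝ) : ℂ) • (Matrix.single i i 1 + Matrix.single i j ω
      + Matrix.single j i (starRingEnd ℂ ω) - Matrix.single j j 1)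
    + (1 - Matrix.single i i 1 - Matrix.single j j 1)

lemma rotMat_herm (i j : Fin d) (ω : ℂ) : (rotMat i j ω)ᴴ = rotMat i j ω := by
  have hX : (Matrix.single i i (1:ℂ) + Matrix.single i j ω
      + Matrix.single j i (starRingEnd ℂ ω) - Matrix.single j j 1)ᴴ
      = Matrix.single i i 1 + Matrix.single i j ω
      + Matrix.single j i (starRingEnd ℂ ω) - Matrix.single j j 1 := by
    simp only [Matrix.conjTranspose_sub, Matrix.conjTranspose_add, stdBasis_conjT,
      Complex.conj_conj, conj_one']
    abel
  simp only [rotMat, Matrix.conjTranspose_add, Matrix.conjTranspose_sub,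
    Matrix.conjTranspose_smul, Matrix.conjTranspose_one, hX, stdBasis_conjT, conj_one',
    Complex.star_def, Complex.conj_ofReal]

lemma rotMat_unitary (i j : Fin d) (ω : ℂ) (hij : i ≠ j) (hω : starRingEnd ℂ ω * ω = 1) :
    rotMat i j ω ∈ Matrix.unitaryGroup (Fin d) ℂ := by
  rw [Matrix.mem_unitaryGroup_iff, Matrix.star_eq_conjTranspose, rotMat_herm]
  set c : ℂ := (((Real.sqrt 2)⁻¹ : ℝ) : ℂ) with hc
  set X : Matrix (Fin d) (Fin d) ℂ := Matrix.single i i 1 + Matrix.single i j ω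
      + Matrix.single j i (starRingEnd ℂ ω) - Matrix.single j j 1 with hX
  set P : Matrix (Fin d) (Fin d) ℂ := Matrix.single i i 1 + Matrix.single j j 1 with hP
  have hω' : ω * starRingEnd ℂ ω = 1 := by rw [mul_comm]; exact hω
  have hne : ¬ (j = i) := fun h => hij h.symm
  have hXX : X * X = P + P := by
    simp only [hX, hP, Matrix.add_mul, Matrix.mul_add, Matrix.sub_mul, Matrix.mul_sub,
      Matrix.single_mul_single_same, Matrix.single_mul_single_of_ne,
      hij, hne, ne_eq, not_false_iff, mul_one, one_mul, hω, hω']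
    abel
  have hPX : P * X = X := by
    simp only [hX, hP, Matrix.add_mul, Matrix.mul_add, Matrix.mul_sub,
      Matrix.single_mul_single_same, Matrix.single_mul_single_of_ne,
      hij, hne, ne_eq, not_false_iff, mul_one, one_mul]
    abel
  have hXP : X * P = X := by
    simp only [hX, hP, Matrix.add_mul, Matrix.mul_add, Matrix.sub_mul,
      Matrix.single_mul_single_same, Matrix.single_mul_single_of_ne,
      hij, hne, ne_eq, not_false_iff, mul_one, one_mul]
    abel
  have hPP : P * P = P := by
    simp only [hP, Matrix.add_mul, Matrix.mul_add,
      Matrix.single_mul_single_same, Matrix.single_mul_single_of_ne,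
      hij, hne, ne_eq, not_false_iff, mul_one]
    abel
  have h1P : (1 : Matrix (Fin d) (Fin d) ℂ) - Matrix.single i i 1
      - Matrix.single j j 1 = 1 - P := by rw [hP]; abel
  have hcc : c * c = (1:ℂ)/2 := by
    rw [hc, ← Complex.ofReal_mul, ← Real.sqrt_inv, Real.mul_self_sqrt (by norm_num)]
    norm_num
  rw [rotMat, ← hX, ← hc, h1P]
  have e1 : X * (1 - P) = 0 := by
    simp only [Matrix.mul_sub, mul_one, hXP, sub_self]
  have e2 : (1 - P) * X = 0 := by
    simp only [Matrix.sub_mul, one_mul, hPX, sub_self]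
  have e3 : (1 - P) * (1 - P) = 1 - P := by
    simp only [Matrix.sub_mul, Matrix.mul_sub, mul_one, one_mul, hPP]
    abel
  have expand : (c • X + (1 - P)) * (c • X + (1 - P))
      = (c*c) • (X*X) + c • (X * (1-P)) + c • ((1-P) * X) + (1-P)*(1-P) := by
    simp only [Matrix.add_mul, Matrix.mul_add, Matrix.smul_mul, Matrix.mul_smul,
      smul_smul, smul_add]
    abel
  rw [expand, e1, e2, e3, hXX, smul_zero, smul_add, hcc]
  module
variable {d : ℕ}

abbrev sphSum (ψ : Fin d → ℂ) : ℝ := ∑ i, Complex.normSq (ψ i)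

lemma continuous_nq (i : Fin d) : Continuous fun ψ : Fin d → ℂ => Complex.normSq (ψ i) :=
  Complex.continuous_normSq.comp (continuous_apply i)

lemma continuous_sphSum : Continuous (sphSum (d := d)) :=
  continuous_finset_sum _ fun i _ => continuous_nq i

lemma nq_le_sphSum {ψ : Fin d → ℂ} (i : Fin d) : Complex.normSq (ψ i) ≤ sphSum ψ :=
  Finset.single_le_sum (fun j _ => Complex.normSq_nonneg _) (Finset.mem_univ i)

section meas
variable {μ : Measure (Fin d → ℂ)} (hprob : IsProbabilityMeasure μ)
  (hsph : ∀ᵐ ψ ∂μ, sphSum ψ = 1)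
  (hinv : ∀ U ∈ Matrix.unitaryGroup (Fin d) ℂ, Measure.map (fun ψ => U.mulVec ψ) μ = μ)

include hprob hsph in
lemma int_of_bounded {f : (Fin d → ℂ) → ℝ} (hf : Continuous f) (C : ℝ)
    (hC : ∀ ψ, sphSum ψ = 1 → |f ψ| ≤ C) : Integrable f μ := by
  haveI := hprob; refine Integrable.mono' (integrable_const C) hf.aestronglyMeasurable ?_
  filter_upwards [hsph] with ψ h
  rw [Real.norm_eq_abs]
  exact hC ψ h

include hinv in
lemma integral_unitary_inv {f : (Fin d → ℂ) → ℝ} (hf : Continuous f)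
    {U : Matrix (Fin d) (Fin d) ℂ} (hU : U ∈ Matrix.unitaryGroup (Fin d) ℂ) :
    ∫ ψ, f (U.mulVec ψ) ∂μ = ∫ ψ, f ψ ∂μ := by
  have hm : Continuous fun ψ : Fin d → ℂ => U.mulVec ψ := by
    refine continuous_pi fun k => ?_
    simp only [Matrix.mulVec, dotProduct]
    exact continuous_finset_sum _ fun j _ => continuous_const.mul (continuous_apply j)
  rw [← MeasureTheory.integral_map hm.measurable.aemeasurable hf.aestronglyMeasurable,
    hinv U hU]
end meas
variable {d : ℕ}
lemma dot_self (φ : Fin d → ℂ) : star φ ⬝ᵥ φ = ((∑ j, Complex.normSq (φ j) : ℝ) : ℂ) := by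
  simp [dotProduct, Complex.normSq_eq_conj_mul_self]

lemma norm_preserved {U : Matrix (Fin d) (Fin d) ℂ} (hU : U ∈ Matrix.unitaryGroup (Fin d) ℂ)
    (ψ : Fin d → ℂ) : ∑ j, Complex.normSq ((Uᴴ.mulVec ψ) j) = ∑ j, Complex.normSq (ψ j) := by
  have h2 : star ψ ᵥ* U = star (Uᴴ.mulVec ψ) := by
    rw [Matrix.star_mulVec, Matrix.conjTranspose_conjTranspose]
  have key : star (Uᴴ.mulVec ψ) ⬝ᵥ (Uᴴ.mulVec ψ) = star ψ ⬝ᵥ ψ := by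
    rw [← h2, ← dotProduct_mulVec, Matrix.mulVec_mulVec,
      ← Matrix.star_eq_conjTranspose, (Matrix.mem_unitaryGroup_iff).mp hU, Matrix.one_mulVec]
  rw [dot_self, dot_self] at key
  exact_mod_cast key

lemma rotMat_mulVec_i (i j : Fin d) (hij : i ≠ j) (ω : ℂ) (ψ : Fin d → ℂ) :
    (rotMat i j ω).mulVec ψ i = (((Real.sqrt 2)⁻¹ : ℝ) : ℂ) * (ψ i + ω * ψ j) := by
  simp only [rotMat, Matrix.add_mulVec, Matrix.sub_mulVec, Matrix.smul_mulVec,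
    Matrix.one_mulVec, Matrix.single_mulVec]
  simp [Function.update_apply, hij, hij.symm, mul_add, smul_eq_mul]

section moments
variable {μ : Measure (Fin d → ℂ)} (hprob : IsProbabilityMeasure μ)
  (hsph : ∀ᵐ ψ ∂μ, sphSum ψ = 1)
  (hinv : ∀ U ∈ Matrix.unitaryGroup (Fin d) ℂ, Measure.map (fun ψ => U.mulVec ψ) μ = μ)

include hprob hsph hinv in
lemma key1 (i j : Fin d) (hij : i ≠ j) (ω : ℂ) (hω : starRingEnd ℂ ω * ω = 1) :
    ∫ ψ, Complex.normSq (ψ i + ω * ψ j)^2 ∂μ = 4 * ∫ ψ, Complex.normSq (ψ i)^2 ∂μ := by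
  have hf : Continuous fun φ : Fin d → ℂ => Complex.normSq (φ i)^2 := (continuous_nq i).pow 2
  have h := integral_unitary_inv hinv hf (rotMat_unitary i j ω hij hω)
  have hpt : ∀ ψ : Fin d → ℂ, Complex.normSq ((rotMat i j ω).mulVec ψ i)^2
      = (1/4) * Complex.normSq (ψ i + ω * ψ j)^2 := by
    intro ψ
    rw [rotMat_mulVec_i i j hij ω ψ, Complex.normSq_mul, Complex.normSq_ofReal,
      ← Real.sqrt_inv, Real.mul_self_sqrt (by norm_num)]
    ring
  simp only [hpt] at h
  rw [MeasureTheory.integral_const_mul] at h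
  linarith

include hprob hsph in
lemma int_nqsq (i : Fin d) : Integrable (fun ψ : Fin d → ℂ => Complex.normSq (ψ i)^2) μ := by
  refine int_of_bounded hprob hsph ((continuous_nq i).pow 2) 1 fun ψ h => ?_
  have h0 : 0 ≤ Complex.normSq (ψ i) := Complex.normSq_nonneg _
  have h1 : Complex.normSq (ψ i) ≤ 1 := h ▸ nq_le_sphSum i
  rw [abs_of_nonneg (by positivity)]
  nlinarith

include hprob hsph in
lemma int_nq11 (i j : Fin d) :
    Integrable (fun ψ : Fin d → ℂ => Complex.normSq (ψ i) * Complex.normSq (ψ j)) μ := by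
  refine int_of_bounded hprob hsph ((continuous_nq i).mul (continuous_nq j)) 1 fun ψ h => ?_
  have h0 : 0 ≤ Complex.normSq (ψ i) := Complex.normSq_nonneg _
  have h0' : 0 ≤ Complex.normSq (ψ j) := Complex.normSq_nonneg _
  have h1 : Complex.normSq (ψ i) ≤ 1 := h ▸ nq_le_sphSum i
  have h1' : Complex.normSq (ψ j) ≤ 1 := h ▸ nq_le_sphSum j
  rw [abs_of_nonneg (by positivity)]
  nlinarith

include hprob hsph in
lemma int_nqω (i j : Fin d) (ω : ℂ) (hω : Complex.normSq ω = 1) :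
    Integrable (fun ψ : Fin d → ℂ => Complex.normSq (ψ i + ω * ψ j)^2) μ := by
  have hc : Continuous fun ψ : Fin d → ℂ => Complex.normSq (ψ i + ω * ψ j) :=
    Complex.continuous_normSq.comp ((continuous_apply i).add
      (continuous_const.mul (continuous_apply j)))
  refine int_of_bounded hprob hsph (hc.pow 2) 16 fun ψ h => ?_
  have h0 : 0 ≤ Complex.normSq (ψ i + ω * ψ j) := Complex.normSq_nonneg _
  have hb : Complex.normSq (ψ i + ω * ψ j)
      ≤ 2 * Complex.normSq (ψ i) + 2 * Complex.normSq (ψ j) := by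
    have := normSq_add_le (ψ i) (ω * ψ j)
    rwa [Complex.normSq_mul, hω, one_mul] at this
  have h1 : Complex.normSq (ψ i) ≤ 1 := h ▸ nq_le_sphSum i
  have h1' : Complex.normSq (ψ j) ≤ 1 := h ▸ nq_le_sphSum j
  rw [abs_of_nonneg (by positivity)]
  nlinarith

include hprob hsph hinv in
lemma relA (i j : Fin d) (hij : i ≠ j) :
    12 * (∫ ψ, Complex.normSq (ψ i)^2 ∂μ)
      = 4 * (∫ ψ, Complex.normSq (ψ j)^2 ∂μ)
        + 16 * ∫ ψ, Complex.normSq (ψ i) * Complex.normSq (ψ j) ∂μ := by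
  have k1 := key1 hprob hsph hinv i j hij 1 (by norm_num)
  have k2 := key1 hprob hsph hinv i j hij (-1) (by simp)
  have k3 := key1 hprob hsph hinv i j hij Complex.I (by simp [Complex.conj_I])
  have k4 := key1 hprob hsph hinv i j hij (-Complex.I) (by simp [Complex.conj_I])
  have n1 : Complex.normSq (1:ℂ) = 1 := by simp
  have n2 : Complex.normSq (-1:ℂ) = 1 := by simp
  have n3 : Complex.normSq (Complex.I) = 1 := by simp
  have n4 : Complex.normSq (-Complex.I) = 1 := by simp
  have hsplit : ∫ ψ, (Complex.normSq (ψ i + 1 * ψ j)^2 + Complex.normSq (ψ i + (-1) * ψ j)^2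
        + Complex.normSq (ψ i + Complex.I * ψ j)^2
        + Complex.normSq (ψ i + (-Complex.I) * ψ j)^2) ∂μ
      = (∫ ψ, Complex.normSq (ψ i + 1 * ψ j)^2 ∂μ)
        + (∫ ψ, Complex.normSq (ψ i + (-1) * ψ j)^2 ∂μ)
        + (∫ ψ, Complex.normSq (ψ i + Complex.I * ψ j)^2 ∂μ)
        + (∫ ψ, Complex.normSq (ψ i + (-Complex.I) * ψ j)^2 ∂μ) := by
    rw [MeasureTheory.integral_add, MeasureTheory.integral_add, MeasureTheory.integral_add]
    · exact int_nqω hprob hsph i j 1 n1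
    · exact int_nqω hprob hsph i j (-1) n2
    · exact (int_nqω hprob hsph i j 1 n1).add (int_nqω hprob hsph i j (-1) n2)
    · exact int_nqω hprob hsph i j Complex.I n3
    · exact ((int_nqω hprob hsph i j 1 n1).add (int_nqω hprob hsph i j (-1) n2)).add
        (int_nqω hprob hsph i j Complex.I n3)
    · exact int_nqω hprob hsph i j (-Complex.I) n4
  have hpt : ∀ ψ : Fin d → ℂ, (Complex.normSq (ψ i + 1 * ψ j)^2
        + Complex.normSq (ψ i + (-1) * ψ j)^2
        + Complex.normSq (ψ i + Complex.I * ψ j)^2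
        + Complex.normSq (ψ i + (-Complex.I) * ψ j)^2)
      = 4 * Complex.normSq (ψ i)^2 + 4 * Complex.normSq (ψ j)^2
        + 16 * (Complex.normSq (ψ i) * Complex.normSq (ψ j)) := by
    intro ψ
    have := four_phase (ψ i) (ψ j)
    rw [one_mul]
    rw [show ψ i + -1 * ψ j = ψ i - ψ j by ring,
      show ψ i + -Complex.I * ψ j = ψ i - Complex.I * ψ j by ring]
    linarith
  have hsplit2 : ∫ ψ, (4 * Complex.normSq (ψ i)^2 + 4 * Complex.normSq (ψ j)^2
        + 16 * (Complex.normSq (ψ i) * Complex.normSq (ψ j))) ∂μ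
      = 4 * (∫ ψ, Complex.normSq (ψ i)^2 ∂μ) + 4 * (∫ ψ, Complex.normSq (ψ j)^2 ∂μ)
        + 16 * ∫ ψ, Complex.normSq (ψ i) * Complex.normSq (ψ j) ∂μ := by
    rw [MeasureTheory.integral_add, MeasureTheory.integral_add,
      MeasureTheory.integral_const_mul, MeasureTheory.integral_const_mul,
      MeasureTheory.integral_const_mul]
    · exact (int_nqsq hprob hsph i).const_mul 4
    · exact (int_nqsq hprob hsph j).const_mul 4
    · exact ((int_nqsq hprob hsph i).const_mul 4).add ((int_nqsq hprob hsph j).const_mul 4)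
    · exact (int_nq11 hprob hsph i j).const_mul 16
  simp only [hpt] at hsplit
  rw [hsplit2, k1, k2, k3, k4] at hsplit
  linarith

include hprob hsph hinv in
lemma J2_eq (i j : Fin d) (hij : i ≠ j) :
    ∫ ψ, Complex.normSq (ψ i)^2 ∂μ = ∫ ψ, Complex.normSq (ψ j)^2 ∂μ := by
  have h1 := relA hprob hsph hinv i j hij
  have h2 := relA hprob hsph hinv j i hij.symm
  have hc : (fun ψ : Fin d → ℂ => Complex.normSq (ψ j) * Complex.normSq (ψ i))
      = fun ψ => Complex.normSq (ψ i) * Complex.normSq (ψ j) :=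
    funext fun ψ => mul_comm _ _
  rw [hc] at h2
  linarith

include hprob hsph hinv in
lemma J11_eq (i j : Fin d) (hij : i ≠ j) :
    ∫ ψ, Complex.normSq (ψ i) * Complex.normSq (ψ j) ∂μ
      = (∫ ψ, Complex.normSq (ψ i)^2 ∂μ) / 2 := by
  have h1 := relA hprob hsph hinv i j hij
  have h2 := J2_eq hprob hsph hinv i j hij
  linarith

end moments

section moments2
set_option linter.unusedSectionVars false
variable {μ : Measure (Fin d → ℂ)} (hprob : IsProbabilityMeasure μ)
  (hsph : ∀ᵐ ψ ∂μ, sphSum ψ = 1)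
  (hinv : ∀ U ∈ Matrix.unitaryGroup (Fin d) ℂ, Measure.map (fun ψ => U.mulVec ψ) μ = μ)

include hprob hsph in
lemma int_nq1 (i : Fin d) : Integrable (fun ψ : Fin d → ℂ => Complex.normSq (ψ i)) μ := by
  refine int_of_bounded hprob hsph (continuous_nq i) 1 fun ψ h => ?_
  have h0 : 0 ≤ Complex.normSq (ψ i) := Complex.normSq_nonneg _
  have h1 : Complex.normSq (ψ i) ≤ 1 := h ▸ nq_le_sphSum i
  rw [abs_of_nonneg h0]; exact h1

include hprob hsph in
lemma int_sphSum_eq_one : ∫ ψ, sphSum ψ ∂μ = 1 := by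
  rw [integral_congr_ae (hsph.mono fun ψ h => h)]
  simp

include hprob hsph in
lemma sum_rule :
    ∑ i, ∑ j, (∫ ψ, Complex.normSq (ψ i) * Complex.normSq (ψ j) ∂μ) = 1 := by
  have h1 : ∫ ψ, (sphSum ψ)^2 ∂μ = 1 := by
    have : (fun ψ : Fin d → ℂ => (sphSum ψ)^2) =ᵐ[μ] fun _ => 1 :=
      hsph.mono fun ψ h => by simp [h]
    rw [integral_congr_ae this]
    simp
  have h2 : ∀ ψ : Fin d → ℂ, (sphSum ψ)^2
      = ∑ i, ∑ j, Complex.normSq (ψ i) * Complex.normSq (ψ j) := fun ψ => by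
    rw [sq, Finset.sum_mul_sum]
  simp only [h2] at h1
  rw [MeasureTheory.integral_finset_sum] at h1
  · rw [← h1]
    refine Finset.sum_congr rfl fun i _ => ?_
    rw [MeasureTheory.integral_finset_sum]
    exact fun j _ => int_nq11 hprob hsph i j
  · exact fun i _ => integrable_finset_sum _ fun j _ => int_nq11 hprob hsph i j

include hprob hsph hinv in
lemma J2_val (hd : 2 ≤ d) (i : Fin d) :
    ∫ ψ, Complex.normSq (ψ i)^2 ∂μ = 2 / ((d:ℝ) * (d+1)) := by
  set a := ∫ ψ, Complex.normSq (ψ i)^2 ∂μ with ha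
  have hall : ∀ k : Fin d, (∫ ψ, Complex.normSq (ψ k)^2 ∂μ) = a := by
    intro k
    by_cases h : k = i
    · rw [h]
    · exact J2_eq hprob hsph hinv k i h
  have hJ11diag : ∀ k : Fin d,
      (∫ ψ, Complex.normSq (ψ k) * Complex.normSq (ψ k) ∂μ) = a := by
    intro k
    rw [show (fun ψ : Fin d → ℂ => Complex.normSq (ψ k) * Complex.normSq (ψ k))
        = fun ψ => Complex.normSq (ψ k)^2 from funext fun ψ => (sq _).symm]
    exact hall k
  have hJ11off : ∀ k l : Fin d, k ≠ l →
      (∫ ψ, Complex.normSq (ψ k) * Complex.normSq (ψ l) ∂μ) = a / 2 := by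
    intro k l hkl
    rw [J11_eq hprob hsph hinv k l hkl, hall k]
  have hsum := sum_rule hprob hsph (d := d) (μ := μ)
  have hrow : ∀ k : Fin d,
      (∑ j, ∫ ψ, Complex.normSq (ψ k) * Complex.normSq (ψ j) ∂μ)
        = a + ((d:ℝ) - 1) * (a/2) := by
    intro k
    rw [← Finset.add_sum_erase _ _ (Finset.mem_univ k), hJ11diag k]
    congr 1
    rw [Finset.sum_congr rfl fun l hl =>
      hJ11off k l (fun h => (Finset.mem_erase.mp hl).1 h.symm)]
    rw [Finset.sum_const, Finset.card_erase_of_mem (Finset.mem_univ k), Finset.card_univ,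
      Fintype.card_fin, nsmul_eq_mul, Nat.cast_sub (by omega), Nat.cast_one]
  simp only [hrow, Finset.sum_const, Finset.card_univ, Fintype.card_fin, nsmul_eq_mul] at hsum
  have hd0 : (0:ℝ) < d := by positivity
  have hd1 : (0:ℝ) < (d:ℝ) + 1 := by positivity
  field_simp at hsum ⊢
  nlinarith [hsum]

include hprob hsph hinv in
lemma Mlem :
    ∫ ψ, ∑ i, (Complex.normSq (ψ i) - 1/(d:ℝ))^2 ∂μ = ((d:ℝ) - 1) / (d * (d+1)) := by
  rcases Nat.lt_or_ge d 2 with hd | hd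
  · interval_cases d
    · simp
    · simp only [Nat.cast_one]
      have hz : (fun ψ : Fin 1 → ℂ => ∑ i, (Complex.normSq (ψ i) - 1/(1:ℝ))^2) =ᵐ[μ]
          fun _ => 0 := by
        filter_upwards [hsph] with ψ h
        have : Complex.normSq (ψ 0) = 1 := by
          simpa [sphSum, Fin.sum_univ_one] using h
        simp [Fin.sum_univ_one, this]
      rw [integral_congr_ae hz]
      simp
  · have hd0 : (0:ℝ) < d := by positivity
    set c : ℝ := 1/(d:ℝ) with hc
    have hpt : ∀ ψ : Fin d → ℂ, ∑ i, (Complex.normSq (ψ i) - c)^2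
        = (∑ i, Complex.normSq (ψ i)^2) - 2*c*(sphSum ψ) + d*c^2 := by
      intro ψ
      have : ∀ i : Fin d, (Complex.normSq (ψ i) - c)^2
          = Complex.normSq (ψ i)^2 - 2*c*Complex.normSq (ψ i) + c^2 := fun i => by ring
      simp only [this, sphSum, Finset.sum_add_distrib, Finset.sum_sub_distrib, ← Finset.mul_sum,
        Finset.sum_const, Finset.card_univ, Fintype.card_fin, nsmul_eq_mul]
    simp only [hpt]
    have hintF : Integrable (fun ψ : Fin d → ℂ => ∑ i, Complex.normSq (ψ i)^2) μ :=
      integrable_finset_sum _ fun i _ => int_nqsq hprob hsph i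
    have hintG : Integrable (fun ψ : Fin d → ℂ => 2*c*(sphSum ψ)) μ :=
      (integrable_finset_sum _ fun i _ => int_nq1 hprob hsph i).const_mul _
    have hFG : Integrable (fun ψ : Fin d → ℂ =>
        (∑ i, Complex.normSq (ψ i)^2) - 2*c*(sphSum ψ)) μ := hintF.sub hintG
    rw [MeasureTheory.integral_add hFG (integrable_const _),
      MeasureTheory.integral_sub hintF hintG, MeasureTheory.integral_const_mul,
      int_sphSum_eq_one hprob hsph,
      MeasureTheory.integral_finset_sum _ fun i _ => int_nqsq hprob hsph i]
    rw [Finset.sum_congr rfl fun i _ => J2_val hprob hsph hinv hd i]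
    rw [Finset.sum_const, Finset.card_univ, Fintype.card_fin, nsmul_eq_mul]
    rw [MeasureTheory.integral_const]
    simp only [measure_univ, probReal_univ, ENNReal.toReal_one, smul_eq_mul, one_mul, hc]
    field_simp
    ring

end moments2

lemma stdBasis_mulVec (i : Fin d) (φ : Fin d → ℂ) :
    (Matrix.single i i (1:ℂ)).mulVec φ = fun x => if x = i then φ i else 0 := by
  funext x
  simp [Matrix.mulVec, dotProduct, Matrix.single, ite_and, eq_comm]

lemma expVal_rotated (U : Matrix (Fin d) (Fin d) ℂ) (i : Fin d) (ψ : Fin d → ℂ) :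
    expVal (rotatedPOVM U i) ψ = (Complex.normSq ((Uᴴ.mulVec ψ) i) : ℂ) := by
  set φ := Uᴴ.mulVec ψ with hφ
  have h1 : (U * Matrix.single i i 1 * Uᴴ).mulVec ψ
      = U.mulVec ((Matrix.single i i 1).mulVec φ) := by
    rw [hφ, Matrix.mulVec_mulVec, Matrix.mulVec_mulVec, Matrix.mul_assoc]
  have h2 : star ψ ᵥ* U = star φ := by
    rw [hφ, Matrix.star_mulVec, Matrix.conjTranspose_conjTranspose]
  rw [rotatedPOVM, expVal, h1, dotProduct_mulVec, h2, stdBasis_mulVec]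
  simp [dotProduct, apply_ite, mul_comm, Complex.normSq_eq_conj_mul_self]

lemma expVal_one (ψ : Fin d → ℂ) :
    expVal (1 : Matrix (Fin d) (Fin d) ℂ) ψ = ((sphSum ψ : ℝ) : ℂ) := by
  push_cast
  simp [expVal, dotProduct, Complex.normSq_eq_conj_mul_self]

lemma expVal_sub (A B : Matrix (Fin d) (Fin d) ℂ) (ψ : Fin d → ℂ) :
    expVal (A - B) ψ = expVal A ψ - expVal B ψ := by
  simp [expVal, Matrix.sub_mulVec, dotProduct_sub]

lemma expVal_add (A B : Matrix (Fin d) (Fin d) ℂ) (ψ : Fin d → ℂ) :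
    expVal (A + B) ψ = expVal A ψ + expVal B ψ := by
  simp [expVal, Matrix.add_mulVec, dotProduct_add]

lemma expVal_smul (c : ℂ) (A : Matrix (Fin d) (Fin d) ℂ) (ψ : Fin d → ℂ) :
    expVal (c • A) ψ = c * expVal A ψ := by
  simp [expVal, Matrix.smul_mulVec, dotProduct_smul, smul_eq_mul]

lemma pointwise_povm (lam : ℝ) {U : Matrix (Fin d) (Fin d) ℂ}
    (hU : U ∈ Matrix.unitaryGroup (Fin d) ℂ) (ψ : Fin d → ℂ) :
    ∑ i, ‖expVal (rotatedPOVM U i - noisyPOVM lam U i) ψ‖^2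
      = ∑ i, ((1-lam) * (Complex.normSq ((Uᴴ.mulVec ψ) i)
          - (1/(d:ℝ)) * sphSum (Uᴴ.mulVec ψ)))^2 := by
  refine Finset.sum_congr rfl fun i _ => ?_
  rw [expVal_sub, noisyPOVM, expVal_add, expVal_smul, expVal_smul, expVal_rotated, expVal_one]
  have : (Complex.normSq ((Uᴴ.mulVec ψ) i) : ℂ)
        - ((lam:ℂ) * (Complex.normSq ((Uᴴ.mulVec ψ) i) : ℂ)
          + (((1 - lam) / d : ℝ):ℂ) * ((sphSum ψ : ℝ):ℂ))
      = (((Complex.normSq ((Uᴴ.mulVec ψ) i)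
          - (lam * Complex.normSq ((Uᴴ.mulVec ψ) i) + (1 - lam) / d * sphSum ψ) : ℝ)):ℂ) := by
    push_cast
    ring
  rw [this, Complex.norm_real, Real.norm_eq_abs, _root_.sq_abs,
    show sphSum ψ = sphSum (Uᴴ.mulVec ψ) from (norm_preserved hU ψ).symm]
  ring

lemma povmDist_eq {μ : Measure (Fin d → ℂ)} (hprob : IsProbabilityMeasure μ)
    (hsph : ∀ᵐ ψ ∂μ, sphSum ψ = 1)
    (hinv : ∀ U ∈ Matrix.unitaryGroup (Fin d) ℂ, Measure.map (fun ψ => U.mulVec ψ) μ = μ)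
    (lam : ℝ) {U : Matrix (Fin d) (Fin d) ℂ} (hU : U ∈ Matrix.unitaryGroup (Fin d) ℂ) :
    povmDist μ (rotatedPOVM U) (noisyPOVM lam U)
      = ((d:ℝ) - 1) / (d * (d + 1)) * (1 - lam)^2 := by
  set g : (Fin d → ℂ) → ℝ := fun φ => ∑ i, ((1-lam) * (Complex.normSq (φ i)
      - (1/(d:ℝ)) * sphSum φ))^2 with hg
  have hgc : Continuous g := by
    refine continuous_finset_sum _ fun i _ => ?_
    exact (continuous_const.mul ((continuous_nq i).sub
      (continuous_const.mul continuous_sphSum))).pow 2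
  have hUH : Uᴴ ∈ Matrix.unitaryGroup (Fin d) ℂ := by
    rw [← Matrix.star_eq_conjTranspose]
    exact Unitary.star_mem hU
  have step1 : povmDist μ (rotatedPOVM U) (noisyPOVM lam U) = ∫ ψ, g (Uᴴ.mulVec ψ) ∂μ := by
    rw [povmDist]
    exact integral_congr_ae (Filter.Eventually.of_forall fun ψ => pointwise_povm lam hU ψ)
  rw [step1, integral_unitary_inv hinv hgc hUH]
  have step3 : (fun ψ : Fin d → ℂ => g ψ) =ᵐ[μ]
      fun ψ => (1-lam)^2 * ∑ i, (Complex.normSq (ψ i) - 1/(d:ℝ))^2 := by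
    filter_upwards [hsph] with ψ h
    rw [hg]
    simp only [h, mul_one, Finset.mul_sum]
    exact Finset.sum_congr rfl fun i _ => by ring
  rw [integral_congr_ae step3, MeasureTheory.integral_const_mul,
    Mlem hprob hsph hinv]
  ring

end AuxForProof

/-- `∫ dU D(E^{(U)}, G^{(U)}) = ((d-1)/(d(d+1))) (1-λ)²`. -/
theorem average_distance_noisy_povm {d : ℕ}
    (μψ : Measure (Fin d → ℂ)) (hψ : UnitInvariantMeasure μψ)
    (μU : Measure (Matrix (Fin d) (Fin d) ℂ)) (hU : IsHaarSU μU)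
    (lam : ℝ) :
    ∫ U, povmDist μψ (rotatedPOVM U) (noisyPOVM lam U) ∂μU
      = ((d : ℝ) - 1) / (d * (d + 1)) * (1 - lam) ^ 2 := by
  obtain ⟨hprobψ, hsph0, hinvψ⟩ := hψ
  have hsph : ∀ᵐ ψ ∂μψ, sphSum ψ = 1 := hsph0.mono fun ψ h => by
    simpa [sphSum, ← Complex.sq_norm] using h
  obtain ⟨hUprob, hUae, _⟩ := hU
  haveI := hUprob
  have hconst : ∀ᵐ U ∂μU, povmDist μψ (rotatedPOVM U) (noisyPOVM lam U)
      = ((d:ℝ) - 1) / (d * (d + 1)) * (1 - lam)^2 := by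
    filter_upwards [hUae] with U hm
    exact povmDist_eq hprobψ hsph hinvψ lam ((Matrix.mem_specialUnitaryGroup_iff.mp hm).1)
  rw [integral_congr_ae hconst, integral_const]
  simp
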